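/- Let S ⊆ T ⊆ [n] with u sorted nonincreasingly and γ ≥ 1. Then (i) k_S ≥ k_T and u_{k_S} ≤ u_{k_T}, and (ii) u(T^γ) ≥ u(S^γ), where k_S, S^γ are as defined (k_S = n+1 if |S| ≤ γ−1, otherwise the γ-th smallest element of S; S^γ = S ∩ [k_S]). -/

import Mathlib

open Finset

/-- The probability function `Φ(S) = max { u(S')/(u(S')+u₀) : S' ⊆ S, |S'| ≤ γ }`. -/
noncomputable def Phi (γ : ℕ) (u : ℕ → ℝ) (u0 : ℝ) (S : Finset ℕ) : ℝ :=
  ((S.powerset.filter fun S' => S'.card ≤ γ).image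
      fun S' => (∑ j ∈ S', u j) / ((∑ j ∈ S', u j) + u0)).max'
    (Finset.Nonempty.image ⟨∅, Finset.mem_filter.mpr ⟨Finset.empty_mem_powerset S, by simp⟩⟩ _)

/-- `k_S = n+1` if `|S| ≤ γ-1`, otherwise the `γ`-th smallest element of `S`. -/
def kS (γ n : ℕ) (S : Finset ℕ) : ℕ :=
  if S.card ≤ γ - 1 then n + 1 else (S.sort (· ≤ ·)).getD (γ - 1) 0

/-- `S^γ = S ∩ [k_S]`. -/
def Sgamma (γ n : ℕ) (S : Finset ℕ) : Finset ℕ :=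
  S ∩ Finset.Icc 1 (kS γ n S)


/-- monotonicity facts: for `S ⊆ T ⊆ [n]`, `k_S ≥ k_T`, `u_{k_S} ≤ u_{k_T}`,
and `u(T^γ) ≥ u(S^γ)`. -/

lemma sort_getD_mem (S : Finset ℕ) {i : ℕ} (hi : i < S.card) :
    (S.sort (· ≤ ·)).getD i 0 ∈ S := by
  have hi' : i < (S.sort (· ≤ ·)).length := by rwa [Finset.length_sort]
  rw [List.getD_eq_getElem _ _ hi']
  exact (Finset.mem_sort _).mp (List.getElem_mem _)

lemma sort_getD_mono (S : Finset ℕ) {i j : ℕ} (hij : i ≤ j) (hj : j < S.card) :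
    (S.sort (· ≤ ·)).getD i 0 ≤ (S.sort (· ≤ ·)).getD j 0 := by
  have hj' : j < (S.sort (· ≤ ·)).length := by rwa [Finset.length_sort]
  have hi' : i < (S.sort (· ≤ ·)).length := lt_of_le_of_lt hij hj'
  rw [List.getD_eq_getElem _ _ hi', List.getD_eq_getElem _ _ hj']
  exact (S.pairwise_sort _).rel_get_of_le (a := ⟨i, hi'⟩) (b := ⟨j, hj'⟩) hij

lemma sort_getD_strictMono (S : Finset ℕ) {i j : ℕ} (hij : i < j) (hj : j < S.card) :
    (S.sort (· ≤ ·)).getD i 0 < (S.sort (· ≤ ·)).getD j 0 := by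
  have hj' : j < (S.sort (· ≤ ·)).length := by rwa [Finset.length_sort]
  have hi' : i < (S.sort (· ≤ ·)).length := lt_trans hij hj'
  rw [List.getD_eq_getElem _ _ hi', List.getD_eq_getElem _ _ hj']
  exact S.sortedLT_sort.pairwise.rel_get_of_lt (a := ⟨i, hi'⟩) (b := ⟨j, hj'⟩) hij

lemma sort_getD_le_iff (S : Finset ℕ) {i : ℕ} (hi : i < S.card) (a : ℕ) :
    (S.sort (· ≤ ·)).getD i 0 ≤ a ↔ i + 1 ≤ (S.filter (· ≤ a)).card := by
  set l := S.sort (· ≤ ·) with hl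
  have hlen : l.length = S.card := Finset.length_sort _
  have hi' : i < l.length := by omega
  constructor
  · intro h
    have hsub : (l.take (i+1)).toFinset ⊆ S.filter (· ≤ a) := by
      intro x hx
      rw [List.mem_toFinset, List.mem_take_iff_getElem] at hx
      obtain ⟨j, hj, rfl⟩ := hx
      have hj' : j < l.length := by omega
      rw [Finset.mem_filter]
      refine ⟨(Finset.mem_sort _).mp (List.getElem_mem _), ?_⟩
      calc l[j] ≤ l.getD i 0 := by
            rw [List.getD_eq_getElem _ _ hi']
            exact (S.pairwise_sort _).rel_get_of_le (a := ⟨j, hj'⟩) (b := ⟨i, hi'⟩)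
              (Fin.mk_le_mk.mpr (by omega))
        _ ≤ a := h
    have hcard : (l.take (i+1)).toFinset.card = i + 1 := by
      rw [List.toFinset_card_of_nodup (S.sort_nodup _ |>.sublist (List.take_sublist _ _))]
      rw [List.length_take, ← hl]; omega
    calc i + 1 = (l.take (i+1)).toFinset.card := hcard.symm
      _ ≤ (S.filter (· ≤ a)).card := Finset.card_le_card hsub
  · intro h
    by_contra hcon
    push_neg at hcon
    have hsub : S.filter (· ≤ a) ⊆ (l.take i).toFinset := by
      intro x hx
      rw [Finset.mem_filter] at hx
      obtain ⟨hxS, hxa⟩ := hx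
      have : x ∈ l := (Finset.mem_sort _).mpr hxS
      obtain ⟨j, hj, rfl⟩ := List.getElem_of_mem this
      have hji : j < i := by
        by_contra hij
        push_neg at hij
        have : l.getD i 0 ≤ l[j] := by
          rw [List.getD_eq_getElem _ _ hi']
          exact (S.pairwise_sort _).rel_get_of_le (a := ⟨i, hi'⟩) (b := ⟨j, hj⟩)
            (Fin.mk_le_mk.mpr hij)
        omega
      rw [List.mem_toFinset, List.mem_take_iff_getElem]
      exact ⟨j, by omega, rfl⟩
    have : (S.filter (· ≤ a)).card ≤ i := by
      calc (S.filter (· ≤ a)).card ≤ (l.take i).toFinset.card := Finset.card_le_card hsub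
        _ ≤ (l.take i).length := List.toFinset_card_le _
        _ ≤ i := by rw [List.length_take]; omega
    omega

lemma sort_getD_anti {S T : Finset ℕ} (hST : S ⊆ T) {i : ℕ} (hi : i < S.card) :
    (T.sort (· ≤ ·)).getD i 0 ≤ (S.sort (· ≤ ·)).getD i 0 := by
  have hiT : i < T.card := lt_of_lt_of_le hi (Finset.card_le_card hST)
  rw [sort_getD_le_iff T hiT]
  calc i + 1 ≤ (S.filter (· ≤ (S.sort (· ≤ ·)).getD i 0)).card :=
        (sort_getD_le_iff S hi _).mp le_rfl
    _ ≤ (T.filter (· ≤ (S.sort (· ≤ ·)).getD i 0)).card :=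
        Finset.card_le_card (Finset.filter_subset_filter _ hST)

lemma Sgamma_eq_image {γ n : ℕ} (hγ : 1 ≤ γ) {S : Finset ℕ} (hS : S ⊆ Finset.Icc 1 n) :
    Sgamma γ n S = (Finset.range (min γ S.card)).image (fun i => (S.sort (· ≤ ·)).getD i 0) := by
  ext x
  simp only [Sgamma, kS, Finset.mem_inter, Finset.mem_image, Finset.mem_range, Finset.mem_Icc]
  by_cases h : S.card ≤ γ - 1
  · rw [if_pos h]
    constructor
    · rintro ⟨hxS, -⟩
      have hx : x ∈ S.sort (· ≤ ·) := (Finset.mem_sort _).mpr hxS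
      obtain ⟨j, hj, rfl⟩ := List.getElem_of_mem hx
      have hj' : j < S.card := by rwa [Finset.length_sort] at hj
      exact ⟨j, by omega, List.getD_eq_getElem _ _ hj⟩
    · rintro ⟨i, hi, rfl⟩
      have hi' : i < S.card := by omega
      have hmem := sort_getD_mem S hi'
      have hxn := hS hmem
      rw [Finset.mem_Icc] at hxn
      exact ⟨hmem, hxn.1, by omega⟩
  · rw [if_neg h]
    have hγ1 : γ - 1 < S.card := by omega
    constructor
    · rintro ⟨hxS, hx1, hxk⟩
      have hx : x ∈ S.sort (· ≤ ·) := (Finset.mem_sort _).mpr hxS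
      obtain ⟨j, hj, rfl⟩ := List.getElem_of_mem hx
      have hj' : j < S.card := by rwa [Finset.length_sort] at hj
      refine ⟨j, ?_, List.getD_eq_getElem _ _ hj⟩
      by_contra hjγ
      push_neg at hjγ
      have : (S.sort (· ≤ ·)).getD (γ-1) 0 < (S.sort (· ≤ ·)).getD j 0 :=
        sort_getD_strictMono S (by omega) hj'
      rw [List.getD_eq_getElem _ _ hj] at this
      omega
    · rintro ⟨i, hi, rfl⟩
      have hi' : i < S.card := by omega
      have hmem := sort_getD_mem S hi'
      have hxn := hS hmem
      rw [Finset.mem_Icc] at hxn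
      exact ⟨hmem, hxn.1, sort_getD_mono S (by omega) hγ1⟩

lemma sum_Sgamma {γ n : ℕ} (hγ : 1 ≤ γ) {S : Finset ℕ} (hS : S ⊆ Finset.Icc 1 n)
    (u : ℕ → ℝ) :
    ∑ j ∈ Sgamma γ n S, u j
      = ∑ i ∈ Finset.range (min γ S.card), u ((S.sort (· ≤ ·)).getD i 0) := by
  rw [Sgamma_eq_image hγ hS, Finset.sum_image]
  intro x hx y hy hxy
  rw [Finset.mem_coe, Finset.mem_range] at hx hy
  by_contra hne
  rcases lt_or_gt_of_ne hne with hlt | hlt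
  · exact absurd hxy (ne_of_lt (sort_getD_strictMono S hlt (by omega)))
  · exact absurd hxy.symm (ne_of_lt (sort_getD_strictMono S hlt (by omega)))

theorem stmt_3 (n γ : ℕ) (hγ : 1 ≤ γ) (u : ℕ → ℝ) (u0 : ℝ) (hu0 : 0 < u0)
    (hnn : ∀ j ∈ Finset.Icc 1 n, 0 ≤ u j) (hn1 : u (n + 1) = 0)
    (hmono : ∀ j ∈ Finset.Icc 1 (n+1), ∀ k ∈ Finset.Icc 1 (n+1), j ≤ k → u k ≤ u j)
    (S T : Finset ℕ) (hST : S ⊆ T) (hT : T ⊆ Finset.Icc 1 n) :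
    kS γ n T ≤ kS γ n S ∧ u (kS γ n S) ≤ u (kS γ n T) ∧
    (∑ j ∈ Sgamma γ n S, u j) ≤ ∑ j ∈ Sgamma γ n T, u j := by
  have hS : S ⊆ Finset.Icc 1 n := hST.trans hT
  have hk : ∀ A : Finset ℕ, A ⊆ Finset.Icc 1 n → kS γ n A ∈ Finset.Icc 1 (n+1) := by
    intro A hA
    unfold kS
    split
    · rw [Finset.mem_Icc]; omega
    · next hc =>
      have := hA (sort_getD_mem A (show γ - 1 < A.card by omega))
      rw [Finset.mem_Icc] at this ⊢
      omega
  have h1 : kS γ n T ≤ kS γ n S := by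
    unfold kS
    by_cases hTc : T.card ≤ γ - 1
    · rw [if_pos hTc, if_pos (le_trans (Finset.card_le_card hST) hTc)]
    · rw [if_neg hTc]
      by_cases hSc : S.card ≤ γ - 1
      · rw [if_pos hSc]
        have := hT (sort_getD_mem T (show γ - 1 < T.card by omega))
        rw [Finset.mem_Icc] at this
        omega
      · rw [if_neg hSc]
        exact sort_getD_anti hST (by omega)
  refine ⟨h1, hmono _ (hk T hT) _ (hk S hS) h1, ?_⟩
  rw [sum_Sgamma hγ hS u, sum_Sgamma hγ hT u]
  have hmm : min γ S.card ≤ min γ T.card :=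
    le_min (min_le_left _ _) (le_trans (min_le_right _ _) (Finset.card_le_card hST))
  have hIcc : Finset.Icc 1 n ⊆ Finset.Icc 1 (n+1) := Finset.Icc_subset_Icc_right (by omega)
  calc ∑ i ∈ Finset.range (min γ S.card), u ((S.sort (· ≤ ·)).getD i 0)
      ≤ ∑ i ∈ Finset.range (min γ S.card), u ((T.sort (· ≤ ·)).getD i 0) := by
        refine Finset.sum_le_sum fun i hi => ?_
        rw [Finset.mem_range] at hi
        have hiS : i < S.card := by omega
        have hiT : i < T.card := lt_of_lt_of_le hiS (Finset.card_le_card hST)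
        exact hmono _ (hIcc (hT (sort_getD_mem T hiT))) _ (hIcc (hS (sort_getD_mem S hiS)))
          (sort_getD_anti hST hiS)
    _ ≤ ∑ i ∈ Finset.range (min γ T.card), u ((T.sort (· ≤ ·)).getD i 0) := by
        refine Finset.sum_le_sum_of_subset_of_nonneg (Finset.range_subset_range.mpr hmm)
          fun i hi _ => ?_
        rw [Finset.mem_range] at hi
        exact hnn _ (hT (sort_getD_mem T (by omega)))
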